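/- Let q = (μ + iν) e^{πi/4} with μ, ν real, |ν| ≤ 1/√2 and μ ≥ 2. Then |e^{(πi/2)q²} − √2 e^{πi/8} cos(πq/2)| ≥ (1/√2) sinh(πμ/(2√2) − π/4) − e^{π/4} e^{−πμ²/2} > 0; in particular the function G(q) = (e^{(πi/2)q²} − √2 e^{πi/8} cos(πq/2))/cos(πq) does not vanish for such q. -/

import Mathlib

open Real Complex

set_option maxHeartbeats 1000000

lemma abs_cos_ge' (z : ℂ) :
    (Real.exp z.im - Real.exp (-z.im)) / 2 ≤ ‖Complex.cos z‖ := by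
  have hdef : Complex.cos z = (Complex.exp (z * I) + Complex.exp (-z * I)) / 2 := rfl
  have h1 : ‖Complex.exp (z * I)‖ = Real.exp (-z.im) := by
    rw [Complex.norm_exp]; congr 1; simp [Complex.mul_re]
  have h2 : ‖Complex.exp (-z * I)‖ = Real.exp z.im := by
    rw [Complex.norm_exp]; congr 1; simp [Complex.mul_re]
  have := norm_sub_norm_le (Complex.exp (-z * I)) (-Complex.exp (z * I))
  simp only [sub_neg_eq_add, norm_neg] at this
  rw [h1, h2] at this
  calc (Real.exp z.im - Real.exp (-z.im)) / 2
      ≤ ‖Complex.exp (-z * I) + Complex.exp (z * I)‖ / 2 := by linarith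
    _ = ‖Complex.cos z‖ := by
        rw [hdef, norm_div, add_comm]; simp

theorem stmt_6 (μ ν : ℝ) (hν : |ν| ≤ 1 / Real.sqrt 2) (hμ : 2 ≤ μ)
    (q : ℂ) (hq : q = (μ + ν * Complex.I) * Complex.exp (π * Complex.I / 4)) :
    ‖Complex.exp (π * Complex.I / 2 * q ^ 2)
        - Real.sqrt 2 * Complex.exp (π * Complex.I / 8) * Complex.cos (π * q / 2)‖
      ≥ (1 / Real.sqrt 2) * Real.sinh (π * μ / (2 * Real.sqrt 2) - π / 4)
          - Real.exp (π / 4) * Real.exp (-π * μ ^ 2 / 2)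
    ∧ 0 < (1 / Real.sqrt 2) * Real.sinh (π * μ / (2 * Real.sqrt 2) - π / 4)
          - Real.exp (π / 4) * Real.exp (-π * μ ^ 2 / 2)
    ∧ (Complex.exp (π * Complex.I / 2 * q ^ 2)
        - Real.sqrt 2 * Complex.exp (π * Complex.I / 8) * Complex.cos (π * q / 2))
        / Complex.cos (π * q) ≠ 0 := by
  set s : ℝ := Real.sqrt 2 with hs_def
  have hs2 : s ^ 2 = 2 := Real.sq_sqrt (by norm_num)
  have hs0 : (0:ℝ) < s := Real.sqrt_pos.2 (by norm_num)
  have hslb : 1.414 ≤ s := by nlinarith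
  have hsub : s ≤ 1.415 := by nlinarith
  have hinv : (1:ℝ) / s = s / 2 := by
    rw [div_eq_div_iff hs0.ne' (by norm_num : (2:ℝ) ≠ 0)]; nlinarith
  have hν' : |ν| ≤ s / 2 := hinv ▸ hν
  have hν2 : ν ^ 2 ≤ 1 / 2 := by
    have h1 : ν ^ 2 = |ν| ^ 2 := (_root_.sq_abs ν).symm
    nlinarith [abs_nonneg ν]
  have hsν : s * |ν| ≤ 1 := by nlinarith [abs_nonneg ν]
  have htform : π * μ / (2 * s) = π * μ * s / 4 := by
    rw [div_eq_div_iff (by positivity : (0:ℝ) < 2 * s).ne' (by norm_num : (4:ℝ) ≠ 0)]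
    linear_combination (-2) * π * μ * hs2
  -- explicit form of q
  have he : Complex.exp (π * Complex.I / 4) = ((s / 2 : ℝ) : ℂ) + ((s / 2 : ℝ) : ℂ) * I := by
    rw [show (π * Complex.I / 4 : ℂ) = ((π / 4 : ℝ) : ℂ) * I by push_cast; ring,
      Complex.exp_mul_I, ← Complex.ofReal_cos, ← Complex.ofReal_sin,
      Real.cos_pi_div_four, Real.sin_pi_div_four]
  have hq2 : q = ((s / 2 * (μ - ν) : ℝ) : ℂ) + ((s / 2 * (μ + ν) : ℝ) : ℂ) * I := by
    rw [hq, he]; push_cast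
    linear_combination ((ν : ℂ) * s / 2) * Complex.I_sq
  -- value of q^2
  have hI2 : Complex.exp (π * Complex.I / 2) = I := by
    rw [show (π * Complex.I / 2 : ℂ) = ((π / 2 : ℝ) : ℂ) * I by push_cast; ring,
      Complex.exp_mul_I, ← Complex.ofReal_cos, ← Complex.ofReal_sin,
      Real.cos_pi_div_two, Real.sin_pi_div_two]
    simp
  have he2 : Complex.exp (π * Complex.I / 4) ^ 2 = I := by
    rw [sq, ← Complex.exp_add,
      show (π * Complex.I / 4 + π * Complex.I / 4 : ℂ) = π * Complex.I / 2 by ring, hI2]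
  have hqsq : q ^ 2 = ((μ:ℂ) + ν * I) ^ 2 * I := by
    rw [hq, mul_pow, he2]
  have hz : π * Complex.I / 2 * q ^ 2
      = ((-(π * (μ ^ 2 - ν ^ 2)) / 2 : ℝ) : ℂ) + ((-(π * μ * ν) : ℝ) : ℂ) * I := by
    rw [hqsq]; push_cast
    linear_combination ((π : ℂ) / 2 * ((μ:ℂ) + ν * I) ^ 2 - (π : ℂ) / 2 * ν ^ 2) * Complex.I_sq
  have hre : (π * Complex.I / 2 * q ^ 2).re = -(π * (μ ^ 2 - ν ^ 2)) / 2 := by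
    rw [hz, Complex.add_re, Complex.ofReal_re, Complex.mul_re, Complex.ofReal_re,
      Complex.ofReal_im, Complex.I_re, Complex.I_im]
    ring
  have habsA : ‖Complex.exp (π * Complex.I / 2 * q ^ 2)‖
      ≤ Real.exp (π / 4) * Real.exp (-π * μ ^ 2 / 2) := by
    rw [Complex.norm_exp, hre, ← Real.exp_add]
    apply Real.exp_le_exp.2
    nlinarith [Real.pi_pos]
  -- B part
  have hb0 : 0 < s / 2 * (μ + ν) := by
    have : -|ν| ≤ ν := neg_abs_le ν
    have h1 : (1:ℝ)/s ≤ 1 := by rw [hinv]; linarith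
    nlinarith [hν.trans h1]
  have hpiq2 : π * q / 2 = ((π * (s / 2 * (μ - ν)) / 2 : ℝ) : ℂ)
      + ((π * (s / 2 * (μ + ν)) / 2 : ℝ) : ℂ) * I := by
    rw [hq2]; push_cast; ring
  have him : (π * q / 2).im = π * (s / 2 * (μ + ν)) / 2 := by
    rw [hpiq2]; simp
  set t : ℝ := π * μ / (2 * s) - π / 4 with ht_def
  set y : ℝ := π * (s / 2 * (μ + ν)) / 2 with hy_def
  have hsν' : -1 ≤ s * ν := by
    nlinarith [mul_le_mul_of_nonneg_left (neg_abs_le ν) hs0.le]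
  have hty : t ≤ y := by
    rw [ht_def, hy_def, htform]
    have h5 : -π ≤ π * (s * ν) := by
      nlinarith [mul_le_mul_of_nonneg_left hsν' Real.pi_pos.le]
    nlinarith [Real.pi_pos]
  have hμs : 2 * 1.414 ≤ μ * s :=
    mul_le_mul hμ hslb (by norm_num) (by linarith)
  have ht0 : 0 < t := by
    rw [ht_def, htform]
    nlinarith [Real.pi_pos, mul_nonneg Real.pi_pos.le (by linarith : (0:ℝ) ≤ μ * s - 2 * 1.414)]
  have hcos : Real.sinh y ≤ ‖Complex.cos (π * q / 2)‖ := by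
    have := abs_cos_ge' (π * q / 2)
    rw [him] at this
    rw [Real.sinh_eq]
    exact this
  have habsB : ‖(Real.sqrt 2 : ℂ) * Complex.exp (π * Complex.I / 8)
      * Complex.cos (π * q / 2)‖ = s * ‖Complex.cos (π * q / 2)‖ := by
    rw [norm_mul, norm_mul, Complex.norm_exp,
      show (π * Complex.I / 8 : ℂ) = ((π / 8 : ℝ) : ℂ) * I by push_cast; ring]
    simp [abs_of_pos hs0, abs_of_nonneg (Real.sqrt_nonneg 2), hs_def]
  have hsinht : 0 < Real.sinh t := Real.sinh_pos_iff.2 ht0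
  have hBlow : 1 / s * Real.sinh t
      ≤ ‖(Real.sqrt 2 : ℂ) * Complex.exp (π * Complex.I / 8)
        * Complex.cos (π * q / 2)‖ := by
    rw [habsB]
    have h1 : Real.sinh t ≤ Real.sinh y := Real.sinh_le_sinh.2 hty
    have h2 : 1 / s ≤ s := by rw [hinv]; linarith
    nlinarith [hcos, hsinht]
  -- main inequality
  have key : 1 / s * Real.sinh t - Real.exp (π / 4) * Real.exp (-π * μ ^ 2 / 2)
      ≤ ‖Complex.exp (π * Complex.I / 2 * q ^ 2)
        - (Real.sqrt 2 : ℂ) * Complex.exp (π * Complex.I / 8) * Complex.cos (π * q / 2)‖ := by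
    have h := norm_sub_norm_le
      ((Real.sqrt 2 : ℂ) * Complex.exp (π * Complex.I / 8) * Complex.cos (π * q / 2))
      (Complex.exp (π * Complex.I / 2 * q ^ 2))
    rw [norm_sub_rev] at h
    linarith
  -- positivity
  have hE : Real.exp (π / 4) * Real.exp (-π * μ ^ 2 / 2) < 1 := by
    rw [← Real.exp_add]
    apply Real.exp_lt_one_iff.2
    nlinarith [Real.pi_pos, mul_le_mul_of_nonneg_left (show (4:ℝ) ≤ μ ^ 2 by nlinarith) Real.pi_pos.le]
  have hone : 1 < 1 / s * Real.sinh t := by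
    have h1 : t < Real.sinh t := Real.self_lt_sinh_iff.2 ht0
    have h3 : s / 2 * t = π * μ / 4 - π * s / 8 := by
      rw [ht_def, htform]
      linear_combination π * μ / 8 * hs2
    have h4 : 1 < s / 2 * t := by
      rw [h3]
      have hπμ : π * 2 ≤ π * μ := mul_le_mul_of_nonneg_left hμ Real.pi_pos.le
      have hπs : π * s ≤ π * 1.415 := mul_le_mul_of_nonneg_left hsub Real.pi_pos.le
      nlinarith [Real.pi_gt_d6]
    rw [hinv]
    have h5 := mul_lt_mul_of_pos_left h1 (by linarith : (0:ℝ) < s / 2)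
    linarith
  have hpos : 0 < 1 / s * Real.sinh t - Real.exp (π / 4) * Real.exp (-π * μ ^ 2 / 2) := by
    linarith
  refine ⟨key, hpos, ?_⟩
  apply div_ne_zero
  · intro h
    rw [h] at key
    simp only [norm_zero] at key
    linarith
  · -- cos (π q) ≠ 0
    have hpiq : π * q = ((π * (s / 2 * (μ - ν)) : ℝ) : ℂ)
        + ((π * (s / 2 * (μ + ν)) : ℝ) : ℂ) * I := by
      rw [hq2]; push_cast; ring
    have him2 : (π * q).im = π * (s / 2 * (μ + ν)) := by rw [hpiq]; simp
    have hy2 : 0 < π * (s / 2 * (μ + ν)) := by positivity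
    have := abs_cos_ge' (π * q)
    rw [him2] at this
    have hexp : Real.exp (-(π * (s / 2 * (μ + ν)))) < Real.exp (π * (s / 2 * (μ + ν))) :=
      Real.exp_lt_exp.2 (by linarith)
    intro h
    rw [h] at this
    simp at this
    linarith
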